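/- Let (X, Σ) be a measurable space, B a separable Banach space, and C : X ⇉ B a multivalued mapping with C(x) closed and nonempty for every x. Then C is weakly measurable (i.e. {x : C(x) ∩ U ≠ ∅} ∈ Σ for every open U ⊆ B) if and only if there exists a sequence (v_n) of measurable maps v_n : X → B such that C(x) is the closure of {v_n(x) : n ∈ ℕ} for every x ∈ X. -/

import Mathlib

open TopologicalSpace Metric Filter

lemma closure_inter_open_nonempty' {α : Type*} [TopologicalSpace α] {S U : Set α}
    (hU : IsOpen U) : (closure S ∩ U).Nonempty ↔ (S ∩ U).Nonempty := by
  constructor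
  · rintro ⟨y, hyc, hyU⟩
    obtain ⟨z, hzU, hzS⟩ := mem_closure_iff.mp hyc U hU hyU
    exact ⟨z, hzS, hzU⟩
  · rintro ⟨y, hyS, hyU⟩
    exact ⟨y, subset_closure hyS, hyU⟩

lemma exists_measurable_selection'
    {X : Type*} [MeasurableSpace X]
    {B : Type*} [NormedAddCommGroup B] [NormedSpace ℝ B] [CompleteSpace B]
    [SeparableSpace B] [MeasurableSpace B] [BorelSpace B]
    (D : X → Set B) (hcl : ∀ x, IsClosed (D x)) (hne : ∀ x, (D x).Nonempty)
    (hw : ∀ U : Set B, IsOpen U → MeasurableSet {x | (D x ∩ U).Nonempty}) :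
    ∃ f : X → B, Measurable f ∧ ∀ x, f x ∈ D x := by
  classical
  haveI : Nonempty B := ⟨0⟩
  set d : ℕ → B := denseSeq B with hd_def
  have hd : DenseRange d := denseRange_denseSeq B
  -- measurability of distance functions
  have hm : ∀ b : B, Measurable fun x => infDist b (D x) := by
    intro b
    apply measurable_of_Iio
    intro r
    by_cases hr : 0 < r
    · have hset : (fun x => infDist b (D x)) ⁻¹' Set.Iio r
          = {x | (D x ∩ ball b r).Nonempty} := by
        ext x
        simp only [Set.mem_preimage, Set.mem_Iio, Set.mem_setOf_eq]
        rw [infDist_lt_iff (hne x)]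
        constructor
        · rintro ⟨y, hy, hyd⟩; exact ⟨y, hy, by rwa [mem_ball, dist_comm]⟩
        · rintro ⟨y, hy, hyd⟩; exact ⟨y, hy, by rwa [mem_ball, dist_comm] at hyd⟩
      rw [hset]; exact hw _ isOpen_ball
    · have hset : (fun x => infDist b (D x)) ⁻¹' Set.Iio r = ∅ := by
        ext x
        simp only [Set.mem_preimage, Set.mem_Iio, Set.mem_empty_iff_false, iff_false, not_lt]
        exact le_trans (not_lt.mp hr) infDist_nonneg
      rw [hset]; exact MeasurableSet.empty
  -- base step
  have h0 : ∀ x, ∃ n, infDist (d n) (D x) < 1 := by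
    intro x
    obtain ⟨c, hc⟩ := hne x
    obtain ⟨n, hn⟩ := hd.exists_dist_lt c one_pos
    exact ⟨n, lt_of_le_of_lt (infDist_le_dist_of_mem hc) (by rwa [dist_comm])⟩
  -- recursive step
  have key : ∀ (x : X) (m k : ℕ), ∃ n, infDist (d n) (D x) < (1/2 : ℝ)^(k+1) ∧
      dist (d n) (d m) < infDist (d m) (D x) + 2 * (1/2 : ℝ)^(k+1) := by
    intro x m k
    have hpos : (0:ℝ) < (1/2 : ℝ)^(k+1) := by positivity
    obtain ⟨c, hc, hcd⟩ := (infDist_lt_iff (hne x)).mp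
      (lt_add_of_pos_right (infDist (d m) (D x)) hpos)
    obtain ⟨n, hn⟩ := hd.exists_dist_lt c hpos
    refine ⟨n, lt_of_le_of_lt (infDist_le_dist_of_mem hc) (by rwa [dist_comm]), ?_⟩
    calc dist (d n) (d m) ≤ dist (d n) c + dist c (d m) := dist_triangle _ _ _
      _ < (1/2:ℝ)^(k+1) + (infDist (d m) (D x) + (1/2:ℝ)^(k+1)) := by
          rw [dist_comm (d n) c, dist_comm c (d m)]; exact add_lt_add hn hcd
      _ = infDist (d m) (D x) + 2 * (1/2:ℝ)^(k+1) := by ring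
  -- the recursively defined approximating sequence
  let g : ℕ → X → ℕ := fun k => Nat.rec (fun x => Nat.find (h0 x))
    (fun k ih x => Nat.find (key x (ih x) k)) k
  have hg0 : ∀ x, g 0 x = Nat.find (h0 x) := fun _ => rfl
  have hgS : ∀ k x, g (k+1) x = Nat.find (key x (g k x) k) := fun _ _ => rfl
  -- measurability of g k
  have hg : ∀ k, Measurable (g k) := by
    intro k
    induction k with
    | zero => exact measurable_find h0 fun n => measurableSet_lt (hm (d n)) measurable_const
    | succ k ihk =>
      have : Measurable fun x => Nat.find (key x (g k x) k) := by
        apply measurable_find (fun x => key x (g k x) k)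
        intro n
        have hset : {x | infDist (d n) (D x) < (1/2 : ℝ)^(k+1) ∧
            dist (d n) (d (g k x)) < infDist (d (g k x)) (D x) + 2 * (1/2 : ℝ)^(k+1)}
            = ⋃ m, ({x | g k x = m} ∩ ({x | infDist (d n) (D x) < (1/2 : ℝ)^(k+1)} ∩
              {x | dist (d n) (d m) < infDist (d m) (D x) + 2 * (1/2 : ℝ)^(k+1)})) := by
          ext x
          simp only [Set.mem_setOf_eq, Set.mem_iUnion, Set.mem_inter_iff]
          constructor
          · rintro ⟨h1, h2⟩; exact ⟨g k x, rfl, h1, h2⟩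
          · rintro ⟨m, hm', h1, h2⟩; rw [hm']; exact ⟨h1, h2⟩
        rw [hset]
        refine MeasurableSet.iUnion fun m => (ihk (measurableSet_singleton m)).inter
          ((measurableSet_lt (hm (d n)) measurable_const).inter
            (measurableSet_lt measurable_const ((hm (d m)).add_const _)))
      exact this
  -- invariant
  have hInv : ∀ k x, infDist (d (g k x)) (D x) < (1/2 : ℝ)^k := by
    intro k
    induction k with
    | zero => intro x; rw [hg0 x, pow_zero]; exact Nat.find_spec (h0 x)
    | succ k ihk => intro x; rw [hgS k x]; exact (Nat.find_spec (key x (g k x) k)).1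
  have hdist : ∀ k x, dist (d (g (k+1) x)) (d (g k x)) ≤ 2 * (1/2 : ℝ)^k := by
    intro k x
    have h2 := (Nat.find_spec (key x (g k x) k)).2
    rw [← hgS k x] at h2
    have : infDist (d (g k x)) (D x) + 2 * (1/2:ℝ)^(k+1) < (1/2:ℝ)^k + (1/2:ℝ)^k := by
      have : 2 * (1/2:ℝ)^(k+1) = (1/2:ℝ)^k := by ring
      rw [this]
      exact add_lt_add_of_lt_of_le (hInv k x) le_rfl
    linarith
  -- Cauchy sequence and limit
  have hcauchy : ∀ x, CauchySeq fun k => d (g k x) := by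
    intro x
    apply cauchySeq_of_le_geometric (1/2 : ℝ) 2 (by norm_num)
    intro k
    rw [dist_comm]
    exact hdist k x
  have hlim : ∀ x, ∃ b, Tendsto (fun k => d (g k x)) atTop (nhds b) :=
    fun x => cauchySeq_tendsto_of_complete (hcauchy x)
  choose f hf using hlim
  refine ⟨f, ?_, ?_⟩
  · exact measurable_of_tendsto_metrizable
      (fun k => measurable_from_top.comp (hg k)) (tendsto_pi_nhds.mpr hf)
  · intro x
    have h1 : Tendsto (fun k => infDist (d (g k x)) (D x)) atTop
        (nhds (infDist (f x) (D x))) :=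
      ((continuous_infDist_pt (D x)).tendsto _).comp (hf x)
    have h2 : Tendsto (fun k => infDist (d (g k x)) (D x)) atTop (nhds 0) := by
      apply squeeze_zero (fun k => infDist_nonneg) (fun k => (hInv k x).le)
      exact tendsto_pow_atTop_nhds_zero_of_lt_one (by norm_num) (by norm_num)
    exact ((hcl x).mem_iff_infDist_zero (hne x)).mpr (tendsto_nhds_unique h1 h2)

/-- **Castaing representation.** Let `(X, Σ)` be a measurable space, `B` a
separable Banach space, and `C : X ⇉ B` a multivalued map with closed nonempty values.
Then `C` is weakly measurable iff there is a sequence of measurable selections `v_n` with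
`C(x) = cl{v_n(x) : n ∈ ℕ}` for every `x`. -/
theorem weakly_measurable_iff_castaing
    {X : Type*} [MeasurableSpace X]
    {B : Type*} [NormedAddCommGroup B] [NormedSpace ℝ B] [CompleteSpace B]
    [SeparableSpace B] [MeasurableSpace B] [BorelSpace B]
    (C : X → Set B) (hcl : ∀ x, IsClosed (C x)) (hne : ∀ x, (C x).Nonempty) :
    (∀ U : Set B, IsOpen U → MeasurableSet {x | (C x ∩ U).Nonempty}) ↔
      ∃ v : ℕ → X → B, (∀ n, Measurable (v n)) ∧
        ∀ x, C x = closure (Set.range fun n => v n x) := by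
  classical
  constructor
  · intro hw
    haveI : Nonempty B := ⟨0⟩
    set d : ℕ → B := denseSeq B with hd_def
    have hd : DenseRange d := denseRange_denseSeq B
    -- the Castaing family of restricted multimaps
    set E : ℕ → ℕ → X → Set B := fun n k x =>
      if (C x ∩ ball (d n) ((1/2 : ℝ)^k)).Nonempty
      then closure (C x ∩ ball (d n) ((1/2 : ℝ)^k)) else C x with hE_def
    have hEsub : ∀ n k x, E n k x ⊆ C x := by
      intro n k x
      simp only [hE_def]
      split
      · exact (closure_minimal Set.inter_subset_left (hcl x))
      · exact subset_rfl
    have hEcl : ∀ n k x, IsClosed (E n k x) := by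
      intro n k x
      simp only [hE_def]
      split
      · exact isClosed_closure
      · exact hcl x
    have hEne : ∀ n k x, (E n k x).Nonempty := by
      intro n k x
      simp only [hE_def]
      split
      · next h => exact h.closure
      · exact hne x
    have hEw : ∀ n k, ∀ U : Set B, IsOpen U → MeasurableSet {x | (E n k x ∩ U).Nonempty} := by
      intro n k U hU
      have hP : MeasurableSet {x | (C x ∩ ball (d n) ((1/2 : ℝ)^k)).Nonempty} :=
        hw _ isOpen_ball
      have hset : {x | (E n k x ∩ U).Nonempty} =
          ({x | (C x ∩ ball (d n) ((1/2 : ℝ)^k)).Nonempty} ∩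
            {x | (C x ∩ (ball (d n) ((1/2 : ℝ)^k) ∩ U)).Nonempty}) ∪
          ({x | (C x ∩ ball (d n) ((1/2 : ℝ)^k)).Nonempty}ᶜ ∩ {x | (C x ∩ U).Nonempty}) := by
        ext x
        by_cases hx : (C x ∩ ball (d n) ((1/2 : ℝ)^k)).Nonempty
        · simp only [hE_def, if_pos hx, Set.mem_setOf_eq, Set.mem_union, Set.mem_inter_iff,
            Set.mem_compl_iff, hx, not_true, false_and, or_false, true_and, if_true]
          rw [closure_inter_open_nonempty' hU, Set.inter_assoc]
        · simp only [hE_def, if_neg hx, Set.mem_setOf_eq, Set.mem_union, Set.mem_inter_iff,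
            Set.mem_compl_iff, hx, false_and, false_or, not_false_iff, true_and, if_false]
      rw [hset]
      exact (hP.inter (hw _ (isOpen_ball.inter hU))).union (hP.compl.inter (hw U hU))
    have hsel : ∀ p : ℕ × ℕ, ∃ f : X → B, Measurable f ∧ ∀ x, f x ∈ E p.1 p.2 x :=
      fun p => exists_measurable_selection' (E p.1 p.2) (hEcl p.1 p.2) (hEne p.1 p.2)
        (hEw p.1 p.2)
    choose w hwm hwmem using hsel
    set e : ℕ ≃ ℕ × ℕ := (Denumerable.eqv (ℕ × ℕ)).symm with he_def
    refine ⟨fun m x => w (e m) x, fun m => hwm (e m), fun x => ?_⟩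
    apply Set.Subset.antisymm
    · -- C x ⊆ closure of range
      intro y hy
      rw [Metric.mem_closure_iff]
      intro ε hε
      obtain ⟨k, hk⟩ := exists_pow_lt_of_lt_one (half_pos hε) (by norm_num : (1/2:ℝ) < 1)
      have hrpos : (0:ℝ) < (1/2 : ℝ)^k := by positivity
      obtain ⟨n, hn⟩ := hd.exists_dist_lt y hrpos
      have hx : (C x ∩ ball (d n) ((1/2 : ℝ)^k)).Nonempty :=
        ⟨y, hy, by rwa [mem_ball]⟩
      have hmem : w (n, k) x ∈ closure (C x ∩ ball (d n) ((1/2 : ℝ)^k)) := by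
        have := hwmem (n, k) x
        simpa only [hE_def, if_pos hx] using this
      have hball : w (n, k) x ∈ closedBall (d n) ((1/2 : ℝ)^k) :=
        closure_ball_subset_closedBall
          (closure_mono Set.inter_subset_right hmem)
      have hdd : dist (w (n, k) x) (d n) ≤ (1/2 : ℝ)^k := mem_closedBall.mp hball
      refine ⟨w (e (e.symm (n, k))) x, Set.mem_range_self _, ?_⟩
      rw [Equiv.apply_symm_apply]
      calc dist y (w (n, k) x) ≤ dist y (d n) + dist (d n) (w (n, k) x) := dist_triangle _ _ _
        _ ≤ (1/2:ℝ)^k + (1/2:ℝ)^k := by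
            rw [dist_comm (d n)]
            exact add_le_add hn.le hdd
        _ < ε := by linarith
    · -- closure of range ⊆ C x
      apply closure_minimal ?_ (hcl x)
      rintro _ ⟨m, rfl⟩
      exact hEsub (e m).1 (e m).2 x (hwmem (e m) x)
  · rintro ⟨v, hvm, hveq⟩ U hU
    have hset : {x | (C x ∩ U).Nonempty} = ⋃ n, (v n) ⁻¹' U := by
      ext x
      simp only [Set.mem_setOf_eq, Set.mem_iUnion, Set.mem_preimage]
      rw [hveq x]
      constructor
      · intro h
        obtain ⟨y, hyc, hyU⟩ := (closure_inter_open_nonempty' hU).mp h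
        obtain ⟨n, rfl⟩ := hyc
        exact ⟨n, hyU⟩
      · rintro ⟨n, hn⟩
        exact ⟨v n x, subset_closure ⟨n, rfl⟩, hn⟩
    rw [hset]
    exact MeasurableSet.iUnion fun n => hU.measurableSet.preimage (hvm n)
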